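/- arXiv:2009.12532 — 6 statements merged into one kernel-verified Lean document; each statement's English description precedes it below -/
import Mathlib

section
/- Let Σ = {(x, P(x)) : x ∈ 𝕋ⁿ} be a C¹ Lagrangian graph in T*𝕋ⁿ, so that P(x) = c + d_x u(x) for some c ∈ ℝⁿ and u ∈ C²(𝕋ⁿ, ℝ). If Σ is invariant under the flow of ẋ = H_p, ṗ = -H_x - λp with λ > 0, then c = 0; i.e., every invariant Lagrangian graph of a conformally symplectic system is exact. -/
open MeasureTheory Set Filter Topology

noncomputable section

abbrev V (n : ℕ) := EuclideanSpace ℝ (Fin n)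

def intVec {n : ℕ} (m : Fin n → ℤ) : V n := WithLp.toLp 2 (fun i => (m i : ℝ))

/-- Let `Σ = {(x, P(x))}` be a `C¹` Lagrangian graph in `T*𝕋ⁿ`, so that
`P(x) = c + dₓu(x)` for some `c ∈ ℝⁿ` and a `ℤⁿ`-periodic `u ∈ C²(𝕋ⁿ, ℝ)`.  If `Σ` is
invariant under the flow of `ẋ = H_p`, `ṗ = -H_x - λp` with `λ > 0`, then `c = 0`:
every invariant Lagrangian graph of a conformally symplectic system is exact. -/
theorem stmt1 {n : ℕ} (lam : ℝ) (hlam : 0 < lam)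
    (H : V n × V n → ℝ) (hH : ContDiff ℝ 2 H)
    (hHper : ∀ (x p : V n) (m : Fin n → ℤ), H (x + intVec m, p) = H (x, p))
    (Hx Hp : V n × V n → V n)
    (hgrad : ∀ z : V n × V n, ∀ u w : V n,
      fderiv ℝ H z (u, w) = (inner ℝ (Hx z) u : ℝ) + (inner ℝ (Hp z) w : ℝ))
    (Φ : ℝ → V n × V n → V n × V n)
    (hΦ0 : ∀ z, Φ 0 z = z)
    (hODE : ∀ (t : ℝ) (z : V n × V n), HasDerivAt (fun s => Φ s z)
      (Hp (Φ t z), -Hx (Φ t z) - lam • (Φ t z).2) t)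
    -- the Lagrangian graph `Σ = Graph(P)`, `P = c + du` with `u` periodic and `C²`
    (u : V n → ℝ) (hu : ContDiff ℝ 2 u)
    (huper : ∀ (x : V n) (m : Fin n → ℤ), u (x + intVec m) = u x)
    (c : V n) (P : V n → V n) (hP : ∀ x, P x = c + gradient u x)
    -- invariance of the graph of `P` under the flow
    (hinv : ∀ (t : ℝ) (x : V n), ∃ y : V n, Φ t (x, P x) = (y, P y)) :
    c = 0 := by
  classical
  have hud : Differentiable ℝ u := hu.differentiable (by norm_num)
  have hfd : ContDiff ℝ 1 (fderiv ℝ u) := hu.fderiv_right (by norm_num)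
  set L := (InnerProductSpace.toDual ℝ (V n)).symm with hL
  have hgradu : gradient u = fun x => L (fderiv ℝ u x) := rfl
  set Lc : StrongDual ℝ (V n) →L[ℝ] V n :=
    { toFun := fun φ => L φ
      map_add' := fun φ ψ => by simp
      map_smul' := fun r φ => by simp
      cont := L.continuous } with hLc
  set A : V n → V n →L[ℝ] V n := fun x => Lc.comp (fderiv ℝ (fderiv ℝ u) x) with hA
  have hAfd : ∀ x, HasFDerivAt (gradient u) (A x) x := by
    intro x
    rw [hgradu]
    exact Lc.hasFDerivAt.comp x ((hfd.differentiable one_ne_zero x).hasFDerivAt)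
  have hgdiff : Differentiable ℝ (gradient u) := fun x => (hAfd x).differentiableAt
  have hAeq : ∀ x v, A x v = L (fderiv ℝ (fderiv ℝ u) x v) := fun x v => rfl
  -- symmetry of the Hessian
  have hsymm : ∀ x v w, (inner ℝ (A x v) w : ℝ) = inner ℝ (A x w) v := by
    intro x v w
    have h2 : ∀ v w, fderiv ℝ (fderiv ℝ u) x v w = fderiv ℝ (fderiv ℝ u) x w v :=
      second_derivative_symmetric (fun y => (hud y).hasFDerivAt)
        ((hfd.differentiable one_ne_zero x).hasFDerivAt)
    rw [hAeq, hAeq, hL, InnerProductSpace.toDual_symm_apply,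
      InnerProductSpace.toDual_symm_apply, h2]
  -- P is differentiable with derivative A
  have hPA : ∀ x, HasFDerivAt P (A x) x := by
    intro x
    have : HasFDerivAt (fun y => c + gradient u y) (A x) x :=
      (hAfd x).const_add c
    convert this using 1
    funext y; exact hP y
  -- key identity from invariance: A x (Hp (x, P x)) = -Hx (x, P x) - lam • P x
  have hkey : ∀ x : V n, A x (Hp (x, P x)) = -Hx (x, P x) - lam • P x := by
    intro x
    set z := (x, P x) with hz
    have hq : (fun t => (Φ t z).2) = fun t => P ((Φ t z).1) := by
      funext t
      obtain ⟨y, hy⟩ := hinv t x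
      rw [← hz] at hy
      rw [hy]
    -- derivative of first component at 0
    have hy0 : HasDerivAt (fun t => (Φ t z).1) (Hp z) 0 := by
      have := (ContinuousLinearMap.fst ℝ (V n) (V n)).hasFDerivAt.comp_hasDerivAt 0 (hODE 0 z)
      simpa [hΦ0, Function.comp_def] using this
    -- derivative of second component at 0
    have hq0 : HasDerivAt (fun t => (Φ t z).2) (-Hx z - lam • P x) 0 := by
      have := (ContinuousLinearMap.snd ℝ (V n) (V n)).hasFDerivAt.comp_hasDerivAt 0 (hODE 0 z)
      simpa [hΦ0, hz, Function.comp_def] using this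
    -- derivative of P ∘ (first component) at 0
    have hy00 : (Φ 0 z).1 = x := by rw [hΦ0 z]
    have hPc : HasDerivAt (fun t => P ((Φ t z).1)) (A x (Hp z)) 0 := by
      have hPx : HasFDerivAt P (A x) ((Φ 0 z).1) := by rw [hy00]; exact hPA x
      exact hPx.comp_hasDerivAt 0 hy0
    rw [hq] at hq0
    exact hPc.unique hq0
  -- the total derivative of F := lam • u + H ∘ graph + lam ⟪c, ·⟫ vanishes
  set F : V n → ℝ := fun x => lam * u x + H (x, P x) + lam * inner ℝ c x with hF
  have hFd : ∀ x : V n, HasFDerivAt F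
      (lam • fderiv ℝ u x +
        (fderiv ℝ H (x, P x)).comp ((ContinuousLinearMap.id ℝ (V n)).prod (A x)) +
        lam • (innerSL ℝ c : V n →L[ℝ] ℝ)) x := by
    intro x
    have h1 : HasFDerivAt (fun y => lam * u y) (lam • fderiv ℝ u x) x :=
      ((hud x).hasFDerivAt).const_mul lam
    have h2 : HasFDerivAt (fun y => H (y, P y))
        ((fderiv ℝ H (x, P x)).comp ((ContinuousLinearMap.id ℝ (V n)).prod (A x))) x := by
      have hHd : HasFDerivAt H (fderiv ℝ H (x, P x)) (x, P x) :=
        (hH.differentiable (by norm_num) (x, P x)).hasFDerivAt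
      exact hHd.comp x ((hasFDerivAt_id x).prodMk (hPA x))
    have h3 : HasFDerivAt (fun y => lam * inner ℝ c y) (lam • (innerSL ℝ c : V n →L[ℝ] ℝ)) x :=
      ((innerSL ℝ c).hasFDerivAt).const_mul lam
    exact (h1.add h2).add h3
  have hFzero : ∀ x : V n, fderiv ℝ F x = 0 := by
    intro x
    rw [(hFd x).fderiv]
    ext w
    have e1 : fderiv ℝ H (x, P x) (w, A x w)
        = (inner ℝ (Hx (x, P x)) w : ℝ) + inner ℝ (Hp (x, P x)) (A x w) := hgrad _ _ _
    have e2 : (inner ℝ (Hp (x, P x)) (A x w) : ℝ) = inner ℝ (A x (Hp (x, P x))) w := by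
      rw [real_inner_comm, hsymm]
    have e3 : fderiv ℝ u x w = inner ℝ (gradient u x) w := by
      rw [hgradu]
      simp only [hL]
      rw [InnerProductSpace.toDual_symm_apply]
    simp only [ContinuousLinearMap.add_apply, ContinuousLinearMap.smul_apply,
      ContinuousLinearMap.comp_apply, ContinuousLinearMap.prod_apply,
      ContinuousLinearMap.id_apply, ContinuousLinearMap.zero_apply, innerSL_apply_apply]
    have e4 : (inner ℝ (-Hx (x, P x) - lam • P x) w : ℝ)
        = -inner ℝ (Hx (x, P x)) w - lam * (inner ℝ c w + inner ℝ (gradient u x) w) := by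
      rw [inner_sub_left, inner_neg_left, real_inner_smul_left, hP x, inner_add_left]
    rw [e1, e2, hkey, e3, e4]
    simp only [smul_eq_mul]
    ring
  have hFdiff : Differentiable ℝ F := fun x => (hFd x).differentiableAt
  have hconst : ∀ x : V n, F x = F 0 := fun x =>
    is_const_of_fderiv_eq_zero hFdiff hFzero x 0
  -- periodicity of the gradient
  have hgper : ∀ (x : V n) (m : Fin n → ℤ), gradient u (x + intVec m) = gradient u x := by
    intro x m
    have hfper : fderiv ℝ u (x + intVec m) = fderiv ℝ u x := by
      have h1 : HasFDerivAt (fun y => u (y + intVec m))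
          ((fderiv ℝ u (x + intVec m)).comp (ContinuousLinearMap.id ℝ (V n))) x :=
        (hud (x + intVec m)).hasFDerivAt.comp x ((hasFDerivAt_id x).add_const (intVec m))
      have h2 : (fun y : V n => u (y + intVec m)) = u := funext fun y => huper y m
      rw [h2, ContinuousLinearMap.comp_id] at h1
      exact (h1.fderiv).symm
    rw [hgradu]
    simp [hfper]
  -- evaluate F at integer points
  have hper : ∀ m : Fin n → ℤ, (inner ℝ c (intVec m) : ℝ) = 0 := by
    intro m
    have h0 : F (intVec m) = F 0 := hconst _
    have hu0 : u (intVec m) = u 0 := by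
      have := huper 0 m; simpa using this
    have hP0 : P (intVec m) = P 0 := by
      have h := hgper 0 m
      rw [zero_add] at h
      rw [hP, hP, h]
    have hH0 : H (intVec m, P (intVec m)) = H (0, P 0) := by
      rw [hP0]
      have := hHper 0 (P 0) m
      simpa using this
    simp only [hF, hu0, hH0, inner_zero_right, mul_zero, add_zero] at h0
    have : lam * inner ℝ c (intVec m) = 0 := by linarith
    exact (mul_eq_zero.mp this).resolve_left (ne_of_gt hlam)
  -- conclude c = 0
  ext i
  have := hper (Pi.single i 1)
  have hiv : intVec (Pi.single i 1) = EuclideanSpace.single i (1 : ℝ) := by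
    ext j
    by_cases h : j = i
    · subst h; simp [intVec]
    · simp [intVec, Pi.single_apply, h, EuclideanSpace.single_apply]
  rw [hiv] at this
  simpa [EuclideanSpace.inner_single_right] using this
end
end

section
/- Suppose K : 𝕋ⁿ → T*𝕋ⁿ is a C¹ embedding conjugating the rotation flow ρ_ω^t(x) = x + ωt to the conformally symplectic flow Φᵗ (i.e., Φᵗ ∘ K = K ∘ ρ_ω^t for all t ∈ ℝ), where (Φᵗ)*Ω = e^{λt}Ω with λ > 0 and Ω the standard symplectic form. Then K*Ω = 0, i.e., the KAM torus K(𝕋ⁿ) is Lagrangian. -/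
open MeasureTheory Set Filter Topology

noncomputable section

/-- standard symplectic form `Ω = dp ∧ dx` on `T*𝕋ⁿ`. -/
def symp {n : ℕ} (a b : V n × V n) : ℝ := (inner ℝ a.2 b.1 : ℝ) - (inner ℝ b.2 a.1 : ℝ)

/-- If `K : 𝕋ⁿ → T*𝕋ⁿ` is a `C¹` embedding conjugating the rotation flow
`ρ_ω^t(x) = x + ωt` to a flow `Φᵗ` satisfying `(Φᵗ)*Ω = e^{λt}Ω` with `λ > 0`, then
`K*Ω = 0`: the KAM torus `K(𝕋ⁿ)` is Lagrangian. -/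
theorem stmt2 {n : ℕ} (lam : ℝ) (hlam : 0 < lam) (ω : V n)
    (Φ : ℝ → V n × V n → V n × V n)
    (DΦ : ℝ → V n × V n → (V n × V n) →L[ℝ] (V n × V n))
    (hDΦ : ∀ (t : ℝ) (z : V n × V n), HasFDerivAt (Φ t) (DΦ t z) z)
    -- the conformally symplectic property `(Φᵗ)*Ω = e^{λt} Ω`
    (hconf : ∀ (t : ℝ) (z : V n × V n) (u v : V n × V n),
      symp (DΦ t z u) (DΦ t z v) = Real.exp (lam * t) * symp u v)
    -- `K` is a C¹ embedding of the torus (lifted to ℝⁿ)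
    (K : V n → V n × V n) (hK : ContDiff ℝ 1 K) (hKinj : Function.Injective K)
    (hKper : ∀ (x : V n) (m : Fin n → ℤ),
      K (x + intVec m) = ((K x).1 + intVec m, (K x).2))
    -- the conjugacy `Φᵗ ∘ K = K ∘ ρ_ω^t`
    (hconj : ∀ (t : ℝ) (x : V n), Φ t (K x) = K (x + t • ω)) :
    ∀ (x : V n) (u v : V n), symp (fderiv ℝ K x u) (fderiv ℝ K x v) = 0 := by
  intro x u v
  set DK : V n → (V n) →L[ℝ] (V n × V n) := fun y => fderiv ℝ K y with hDKdef
  have hKd : ∀ y, HasFDerivAt K (DK y) y := fun y =>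
    (hK.differentiable one_ne_zero y).hasFDerivAt
  set f : V n → ℝ := fun y => symp (DK y u) (DK y v) with hfdef
  -- the chain rule identity coming from the conjugacy
  have key : ∀ (t : ℝ) (y : V n), f (y + t • ω) = Real.exp (lam * t) * f y := by
    intro t y
    have h1 : HasFDerivAt (fun z => Φ t (K z)) ((DΦ t (K y)).comp (DK y)) y :=
      (hDΦ t (K y)).comp y (hKd y)
    have h2 : HasFDerivAt (fun z => Φ t (K z))
        ((DK (y + t • ω)).comp (ContinuousLinearMap.id ℝ (V n))) y := by
      have hid : HasFDerivAt (fun z : V n => z + t • ω)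
          (ContinuousLinearMap.id ℝ (V n)) y := (hasFDerivAt_id y).add_const _
      have := (hKd (y + t • ω)).comp y hid
      exact this.congr_of_eventuallyEq (Filter.Eventually.of_forall fun z => by simp [hconj])
    have heq : DK (y + t • ω) = (DΦ t (K y)).comp (DK y) := by
      have := h2.unique h1
      simpa using this
    simp only [hfdef, heq, ContinuousLinearMap.comp_apply, hconf]
  -- periodicity of f
  have hper : ∀ (y : V n) (m : Fin n → ℤ), f (y + intVec m) = f y := by
    intro y m
    have h1 : HasFDerivAt (fun z => K (z + intVec m)) (DK (y + intVec m)) y := by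
      have hid : HasFDerivAt (fun z : V n => z + intVec m)
          (ContinuousLinearMap.id ℝ (V n)) y := (hasFDerivAt_id y).add_const _
      have := (hKd (y + intVec m)).comp y hid
      rw [ContinuousLinearMap.comp_id] at this
      exact this
    have h2 : HasFDerivAt (fun z => K (z + intVec m)) (DK y) y := by
      have he : (fun z => K (z + intVec m)) = (fun z => K z + (intVec m, (0 : V n))) := by
        funext z
        rw [hKper]
        ext <;> simp
      rw [he]
      exact (hKd y).add_const _
    have heq : DK (y + intVec m) = DK y := h1.unique h2
    simp only [hfdef, heq]
  -- f is continuous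
  have hfc : Continuous f := by
    have hDKc : Continuous DK := hK.continuous_fderiv one_ne_zero
    have h1 : Continuous fun y => DK y u := hDKc.clm_apply continuous_const
    have h2 : Continuous fun y => DK y v := hDKc.clm_apply continuous_const
    simp only [hfdef, symp]
    exact ((h1.snd.inner h2.fst)).sub (h2.snd.inner h1.fst)
  -- f is bounded, using periodicity and compactness of the fundamental domain
  obtain ⟨C, hC⟩ : ∃ C, ∀ z ∈ Metric.closedBall (0 : V n) (Real.sqrt n), ‖f z‖ ≤ C :=
    (isCompact_closedBall _ _).exists_bound_of_continuousOn hfc.continuousOn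
  have hbound : ∀ y : V n, |f y| ≤ C := by
    intro y
    set g : V n := WithLp.toLp 2 (fun i => Int.fract (y i) : Fin n → ℝ)
    have hdecomp : y = g + intVec (fun i => ⌊y i⌋) := by
      ext i
      show y i = Int.fract (y i) + (⌊y i⌋ : ℝ)
      rw [Int.fract_add_floor]
    have hfy : f y = f g := by rw [hdecomp, hper]
    have hgball : g ∈ Metric.closedBall (0 : V n) (Real.sqrt n) := by
      rw [Metric.mem_closedBall, dist_zero_right]
      have : ‖g‖ ≤ Real.sqrt (∑ _i : Fin n, (1 : ℝ)) := by
        rw [EuclideanSpace.norm_eq]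
        apply Real.sqrt_le_sqrt
        apply Finset.sum_le_sum
        intro i _
        have h0 : (0 : ℝ) ≤ Int.fract (y i) := Int.fract_nonneg _
        have h1 : Int.fract (y i) < 1 := Int.fract_lt_one _
        have : ‖g i‖ = Int.fract (y i) := by
          show |Int.fract (y i)| = _
          exact abs_of_nonneg h0
        rw [this]
        nlinarith
      simpa using this
    rw [hfy]
    exact hC g hgball
  -- conclude
  by_contra hne
  have hfx : f x ≠ 0 := hne
  have hfxpos : 0 < |f x| := abs_pos.mpr hfx
  have hCfx : |f x| ≤ C := by
    have := hbound x
    simpa using this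
  set t : ℝ := (Real.log (C / |f x|) + 1) / lam with htdef
  have hlt : lam * t = Real.log (C / |f x|) + 1 := by
    rw [htdef]
    field_simp
  have hCpos : 0 < C := lt_of_lt_of_le hfxpos hCfx
  have hexp : Real.exp (lam * t) = (C / |f x|) * Real.exp 1 := by
    rw [hlt, Real.exp_add, Real.exp_log (by positivity)]
  have := key t x
  have habs : |f (x + t • ω)| = Real.exp (lam * t) * |f x| := by
    rw [this, abs_mul, abs_of_pos (Real.exp_pos _)]
  have hb := hbound (x + t • ω)
  rw [habs, hexp] at hb
  have he1 : (1 : ℝ) < Real.exp 1 := by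
    have := Real.add_one_lt_exp (x := 1) one_ne_zero
    linarith
  have : C / |f x| * Real.exp 1 * |f x| = C * Real.exp 1 := by
    field_simp
  rw [this] at hb
  nlinarith
end
end

section
/- Let a 2-form β on 𝕋ⁿ with continuous coefficients satisfy (ρ_ω^{-t})*β = e^{-λt}β for all t ≥ 0, where ρ_ω^t is the rotation flow by ω ∈ ℝⁿ and λ > 0. Then β = 0. -/
open MeasureTheory Set Filter Topology

noncomputable section
set_option maxHeartbeats 1000000
set_option synthInstance.maxHeartbeats 400000

/-- Let `β` be a continuous 2-form on `𝕋ⁿ` (a continuous, periodic family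
of alternating bilinear forms) satisfying `(ρ_ω^{-t})*β = e^{-λt}β` for all `t ≥ 0`, where
`ρ_ω^t` is the rotation flow by `ω` and `λ > 0`.  Then `β = 0`.
(Since the differential of a translation is the identity, the pullback condition reads
`β(x - tω) = e^{-λt} β(x)`.) -/
theorem stmt3 {n : ℕ} (lam : ℝ) (hlam : 0 < lam) (ω : V n)
    (β : V n → (V n →L[ℝ] V n →L[ℝ] ℝ))
    (hβcont : Continuous β)
    (hβper : ∀ (x : V n) (m : Fin n → ℤ), β (x + intVec m) = β x)
    (hβalt : ∀ (x : V n) (u : V n), β x u u = 0)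
    (hpull : ∀ t : ℝ, 0 ≤ t → ∀ x : V n, β (x - t • ω) = Real.exp (-(lam * t)) • β x) :
    ∀ x : V n, β x = 0 := by
  intro x
  ext u v
  show β x u v = 0
  -- the scalar function g y = β y u v
  set g : V n → ℝ := fun y => β y u v with hg
  have hgcont : Continuous g := by
    have h1 : Continuous fun A : (V n →L[ℝ] V n →L[ℝ] ℝ) => A u v :=
      ((ContinuousLinearMap.apply ℝ ℝ v).comp
        (ContinuousLinearMap.apply ℝ (V n →L[ℝ] ℝ) u)).continuous
    exact h1.comp hβcont
  -- g is bounded: by periodicity, every value of g is attained on a compact ball.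
  obtain ⟨M, hM⟩ : ∃ M, ∀ y ∈ Metric.closedBall (0 : V n) (Real.sqrt n), ‖g y‖ ≤ M :=
    (isCompact_closedBall (0 : V n) (Real.sqrt n)).exists_bound_of_continuousOn
      hgcont.continuousOn
  have hbound : ∀ z : V n, |g z| ≤ M := by
    intro z
    set m : Fin n → ℤ := fun i => ⌊z i⌋ with hm
    set y : V n := z - intVec m with hy
    have hgy : g y = g z := by
      have h := hβper y m
      rw [hy, sub_add_cancel] at h
      simp only [hg, h, hy]
    rw [← hgy, ← Real.norm_eq_abs]
    apply hM
    rw [Metric.mem_closedBall, dist_zero_right, EuclideanSpace.norm_eq]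
    apply Real.sqrt_le_sqrt
    calc ∑ i, ‖y i‖ ^ 2 ≤ ∑ _i : Fin n, (1 : ℝ) := by
          apply Finset.sum_le_sum
          intro i _
          have hyi : y i = z i - (⌊z i⌋ : ℝ) := rfl
          have h0 : (0:ℝ) ≤ z i - (⌊z i⌋ : ℝ) := by linarith [Int.floor_le (z i)]
          have h1 : z i - (⌊z i⌋ : ℝ) ≤ 1 := by linarith [Int.lt_floor_add_one (z i)]
          have hnorm : ‖y i‖ ≤ 1 := by
            rw [hyi, Real.norm_eq_abs, abs_of_nonneg h0]; exact h1
          calc ‖y i‖ ^ 2 ≤ 1 ^ 2 := pow_le_pow_left₀ (norm_nonneg _) hnorm 2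
            _ = 1 := one_pow 2
      _ = (n : ℝ) := by simp
  have key : ∀ t : ℝ, 0 ≤ t → |g x| ≤ Real.exp (-(lam * t)) * M := by
    intro t ht
    have h := hpull t ht (x + t • ω)
    rw [add_sub_cancel_right] at h
    have hsc : g x = Real.exp (-(lam * t)) * g (x + t • ω) := by
      simp only [hg, h, ContinuousLinearMap.smul_apply, smul_eq_mul]
    rw [hsc, abs_mul, abs_of_pos (Real.exp_pos _)]
    exact mul_le_mul_of_nonneg_left (hbound _) (Real.exp_pos _).le
  have hlim : Tendsto (fun t : ℝ => Real.exp (-(lam * t)) * M) atTop (𝓝 0) := by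
    have h1 : Tendsto (fun t : ℝ => -(lam * t)) atTop atBot := by
      apply tendsto_neg_atBot_iff.mpr
      exact Tendsto.const_mul_atTop hlam tendsto_id
    simpa using (Real.tendsto_exp_atBot.comp h1).mul_const M
  have hle : |g x| ≤ 0 :=
    ge_of_tendsto hlim (Filter.eventually_atTop.mpr ⟨0, fun t ht => key t ht⟩)
  have : |g x| = 0 := le_antisymm hle (abs_nonneg _)
  simpa [hg] using abs_eq_zero.mp this
end
end

section
/- Let L be a Tonelli Lagrangian on 𝕋ⁿ, λ > 0, and let u⁻ be the value function u⁻(x) = inf_{γ(0)=x} ∫_{-∞}^0 e^{λτ} L(γ,γ̇) dτ. Let U_ψ(x,t) = (T_t⁻ψ)(x) be the Lax–Oleinik evolution of ψ ∈ C(𝕋ⁿ,ℝ). Then there is a constant C₁ depending only on ‖ψ‖_∞, λ, min L, and max_x |L(x,0)| such that ‖U_ψ(·,t) - u⁻‖_∞ ≤ C₁ e^{-λt} for all t ≥ 1. In particular T_t⁻ψ → u⁻ uniformly, with exponential rate λ, independently of ψ. -/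
open MeasureTheory Set Filter Topology intervalIntegral

noncomputable section

def curveFrom {n : ℕ} (x : V n) (g : ℝ → V n) : ℝ → V n :=
  fun τ => x + ∫ s in (0:ℝ)..τ, g s

/-- discounted Lax–Oleinik semigroup `U_ψ(x,t) = (T_t⁻ψ)(x)`. -/
def lax {n : ℕ} (L : V n → V n → ℝ) (lam : ℝ) (ψ : V n → ℝ) (t : ℝ) (x : V n) : ℝ :=
  sInf { a | ∃ g : ℝ → V n, IntervalIntegrable g volume (-t) 0 ∧
    IntervalIntegrable (fun τ => Real.exp (lam * τ) * L (curveFrom x g τ) (g τ))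
      volume (-t) 0 ∧
    a = Real.exp (-(lam * t)) * ψ (curveFrom x g (-t)) +
      ∫ τ in (-t)..0, Real.exp (lam * τ) * L (curveFrom x g τ) (g τ) }

/-- discounted value function `u⁻`. -/
def uminus {n : ℕ} (L : V n → V n → ℝ) (lam : ℝ) (x : V n) : ℝ :=
  sInf { a | ∃ g : ℝ → V n, (∀ T : ℝ, IntervalIntegrable g volume (-T) 0) ∧
    IntegrableOn (fun τ => Real.exp (lam * τ) * L (curveFrom x g τ) (g τ)) (Set.Iic 0)
      volume ∧
    a = ∫ τ in Set.Iic (0:ℝ), Real.exp (lam * τ) * L (curveFrom x g τ) (g τ) }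

/-! ### Auxiliary lemmas -/

lemma expIic_integrableOn {lam : ℝ} (hlam : 0 < lam) (b : ℝ) :
    IntegrableOn (fun τ => Real.exp (lam * τ)) (Iic b) volume := by
  have hF : Integrable ((Iic (lam*b)).indicator Real.exp) volume :=
    (integrable_indicator_iff measurableSet_Iic).2 (integrableOn_exp_Iic _)
  have heq : (fun τ => ((Iic (lam*b)).indicator Real.exp) (lam * τ)) =
      (Iic b).indicator (fun τ => Real.exp (lam * τ)) := by
    funext τ
    by_cases h : τ ≤ b
    · rw [indicator_of_mem (mem_Iic.2 h), indicator_of_mem]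
      exact mem_Iic.2 (by nlinarith)
    · rw [indicator_of_notMem (fun hc => h (mem_Iic.1 hc)), indicator_of_notMem]
      intro hc
      exact h (le_of_not_gt fun hb => absurd (mem_Iic.1 hc) (not_le.2 (by nlinarith)))
  have h1 : Integrable ((Iic b).indicator (fun τ => Real.exp (lam * τ))) volume := by
    rw [← heq]; exact hF.comp_mul_left' hlam.ne'
  exact (integrable_indicator_iff measurableSet_Iic).1 h1

lemma expIic_integral {lam : ℝ} (hlam : 0 < lam) (b : ℝ) :
    ∫ τ in Iic b, Real.exp (lam * τ) = Real.exp (lam * b) / lam := by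
  have hF : Integrable ((Iic (lam*b)).indicator Real.exp) volume :=
    (integrable_indicator_iff measurableSet_Iic).2 (integrableOn_exp_Iic _)
  have heq : (fun τ => ((Iic (lam*b)).indicator Real.exp) (lam * τ)) =
      (Iic b).indicator (fun τ => Real.exp (lam * τ)) := by
    funext τ
    by_cases h : τ ≤ b
    · rw [indicator_of_mem (mem_Iic.2 h), indicator_of_mem]
      exact mem_Iic.2 (by nlinarith)
    · rw [indicator_of_notMem (fun hc => h (mem_Iic.1 hc)), indicator_of_notMem]
      intro hc
      exact h (le_of_not_gt fun hb => absurd (mem_Iic.1 hc) (not_le.2 (by nlinarith)))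
  rw [← MeasureTheory.integral_indicator measurableSet_Iic, ← heq,
    Measure.integral_comp_mul_left ((Iic (lam*b)).indicator Real.exp) lam,
    MeasureTheory.integral_indicator measurableSet_Iic, integral_exp_Iic]
  rw [abs_of_pos (inv_pos.2 hlam)]
  simp [smul_eq_mul, div_eq_inv_mul, mul_comm]

/-- key tail estimate: on any subset of `Iic b`, an integrand bounded below by
`-M e^{λτ}` has integral at least `-M e^{λb}/λ`. -/
lemma tail_lb {lam M b : ℝ} (hlam : 0 < lam) (hM : 0 ≤ M) {h : ℝ → ℝ} {s : Set ℝ}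
    (hs : s ⊆ Iic b) (hint : IntegrableOn h s volume)
    (hlb : ∀ τ, -M * Real.exp (lam * τ) ≤ h τ) :
    -M * (Real.exp (lam * b) / lam) ≤ ∫ τ in s, h τ := by
  have hexp : IntegrableOn (fun τ => Real.exp (lam * τ)) s volume :=
    (expIic_integrableOn hlam b).mono_set hs
  have h1 : ∫ τ in s, -M * Real.exp (lam*τ) ≤ ∫ τ in s, h τ :=
    integral_mono (hexp.const_mul _) hint (fun τ => hlb τ)
  have h2 : ∫ τ in s, -M * Real.exp (lam*τ) = -M * ∫ τ in s, Real.exp (lam*τ) :=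
    integral_const_mul _ _
  have h3 : ∫ τ in s, Real.exp (lam*τ) ≤ ∫ τ in Iic b, Real.exp (lam*τ) :=
    setIntegral_mono_set (expIic_integrableOn hlam b)
      (Filter.Eventually.of_forall (fun τ => (Real.exp_pos _).le))
      (HasSubset.Subset.eventuallyLE hs)
  rw [expIic_integral hlam b] at h3
  have h4 : -M * (Real.exp (lam * b) / lam) ≤ -M * ∫ τ in s, Real.exp (lam*τ) :=
    mul_le_mul_of_nonpos_left h3 (by linarith)
  linarith [h1, h2 ▸ h1]

lemma reduce {n : ℕ} (x : V n) :
    ∃ y : V n, ‖y‖ ≤ Real.sqrt n ∧ ∃ m : Fin n → ℤ, x = y + intVec m := by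
  refine ⟨WithLp.toLp 2 (fun i => Int.fract (x i)), ?_, fun i => ⌊x i⌋, ?_⟩
  · rw [EuclideanSpace.norm_eq]
    apply Real.sqrt_le_sqrt
    calc ∑ i, ‖Int.fract (x i)‖ ^ 2 ≤ ∑ _i : Fin n, (1:ℝ) := by
          apply Finset.sum_le_sum
          intro i _
          have h1 : |Int.fract (x i)| ≤ 1 :=
            le_of_lt (abs_lt.2 ⟨by linarith [Int.fract_nonneg (x i)], Int.fract_lt_one (x i)⟩)
          calc ‖Int.fract (x i)‖ ^ 2 ≤ 1 ^ 2 := by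
                apply pow_le_pow_left₀ (norm_nonneg _) _ 2
                simpa [Real.norm_eq_abs] using h1
            _ = 1 := one_pow 2
      _ = (n : ℝ) := by simp
  · ext i
    show x i = Int.fract (x i) + (⌊x i⌋ : ℝ)
    rw [Int.fract]; ring

lemma bdd_per {n : ℕ} (f : V n → ℝ) (hf : Continuous f)
    (hper : ∀ (x : V n) (m : Fin n → ℤ), f (x + intVec m) = f x) :
    ∃ M : ℝ, 0 ≤ M ∧ ∀ x, |f x| ≤ M := by
  obtain ⟨y₀, -, hmax⟩ := (isCompact_closedBall (0 : V n) (Real.sqrt n)).exists_isMaxOn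
    ⟨0, Metric.mem_closedBall_self (Real.sqrt_nonneg _)⟩ ((continuous_abs.comp hf).continuousOn)
  refine ⟨|f y₀|, abs_nonneg _, fun x => ?_⟩
  obtain ⟨y, hy, m, rfl⟩ := reduce x
  rw [hper y m]
  exact hmax (Metric.mem_closedBall.2 (by simpa [dist_eq_norm] using hy))

lemma local_lb {n : ℕ} (L : V n → V n → ℝ) (hL : Continuous (Function.uncurry L))
    (hconv : ∀ x : V n, StrictConvexOn ℝ Set.univ (L x))
    (hsuper : ∀ (x : V n) (C : ℝ), ∃ R : ℝ, ∀ v : V n, R ≤ ‖v‖ → C * ‖v‖ ≤ L x v)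
    (K : ℝ) (hK : ∀ y : V n, |L y 0| ≤ K) (x₀ : V n) :
    ∃ δ : ℝ, 0 < δ ∧ ∃ m : ℝ, ∀ x ∈ Metric.ball x₀ δ, ∀ v : V n, m ≤ L x v := by
  have hK0 : 0 ≤ K := le_trans (abs_nonneg _) (hK x₀)
  obtain ⟨R₁, hR₁⟩ := hsuper x₀ 2
  set R₀ : ℝ := max R₁ (K + 1) with hR₀def
  have hR₀K : K + 1 ≤ R₀ := le_max_right _ _
  have hR₀pos : 0 < R₀ := lt_of_lt_of_le (by linarith) hR₀K
  have hs : IsCompact (Metric.closedBall x₀ 1 ×ˢ Metric.closedBall (0 : V n) (2 * R₀)) :=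
    (isCompact_closedBall _ _).prod (isCompact_closedBall _ _)
  have huc := hs.uniformContinuousOn_of_continuous hL.continuousOn
  rw [Metric.uniformContinuousOn_iff] at huc
  obtain ⟨δ₀, hδ₀, hδ⟩ := huc 1 one_pos
  obtain ⟨v₀, -, hmin⟩ := (isCompact_closedBall (0 : V n) (2 * R₀)).exists_isMinOn
    ⟨0, Metric.mem_closedBall_self (by positivity)⟩
    ((hL.comp (Continuous.prodMk_right x₀)).continuousOn)
  set b₀ : ℝ := L x₀ v₀
  refine ⟨min δ₀ 1, lt_min hδ₀ one_pos, min (b₀ - 1) (-(K + 1)), fun x hx v => ?_⟩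
  have hx1 : x ∈ Metric.closedBall x₀ 1 :=
    Metric.mem_closedBall.2 (le_trans (le_of_lt (Metric.mem_ball.1 hx)) (min_le_right _ _))
  have hxδ : dist x x₀ < δ₀ := lt_of_lt_of_le (Metric.mem_ball.1 hx) (min_le_left _ _)
  have hclose : ∀ w : V n, ‖w‖ ≤ 2 * R₀ → L x₀ w - 1 ≤ L x w := by
    intro w hw
    have hw' : w ∈ Metric.closedBall (0 : V n) (2 * R₀) := by
      simpa [Metric.mem_closedBall, dist_eq_norm] using hw
    have := hδ (x, w) ⟨hx1, hw'⟩ (x₀, w) ⟨Metric.mem_closedBall_self zero_le_one, hw'⟩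
      (by simpa [Prod.dist_eq, hδ₀] using hxδ)
    have habs : |L x w - L x₀ w| < 1 := by
      simpa [Function.uncurry, Real.dist_eq] using this
    linarith [abs_lt.1 habs]
  by_cases hv : ‖v‖ ≤ 2 * R₀
  · have h1 := hclose v hv
    have h2 : b₀ ≤ L x₀ v := hmin (by simpa [Metric.mem_closedBall, dist_eq_norm] using hv)
    exact le_trans (min_le_left _ _) (by linarith)
  · push_neg at hv
    set θ : ℝ := (2 * R₀) / ‖v‖ with hθdef
    have hvpos : 0 < ‖v‖ := lt_trans (by positivity) hv
    have hθpos : 0 < θ := by positivity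
    have hθlt : θ < 1 := (div_lt_one hvpos).2 hv
    set w : V n := θ • v with hwdef
    have hwnorm : ‖w‖ = 2 * R₀ := by
      rw [hwdef, norm_smul, Real.norm_eq_abs, abs_of_pos hθpos, hθdef,
        div_mul_cancel₀ _ hvpos.ne']
    have hcvx := (hconv x).convexOn.2 (mem_univ (0 : V n)) (mem_univ v)
      (by linarith : (0:ℝ) ≤ 1 - θ) hθpos.le (by ring)
    rw [smul_zero, zero_add] at hcvx
    have hbig : 2 * ‖w‖ ≤ L x₀ w :=
      hR₁ w (by rw [hwnorm]; exact le_trans (le_max_left _ _) (by linarith))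
    have hLxw : 4 * R₀ - 1 ≤ L x w := by
      have := hclose w (le_of_eq hwnorm)
      rw [hwnorm] at hbig; linarith
    have hLx0 : L x 0 ≤ K := le_trans (le_abs_self _) (hK x)
    have hww : L x 0 ≤ L x w := by linarith
    have hkey : θ * L x 0 ≤ θ * L x v := by
      have : L x w ≤ (1 - θ) * L x 0 + θ * L x v := hcvx
      nlinarith
    have h5 : L x 0 ≤ L x v := le_of_mul_le_mul_left (by linarith [hkey]) hθpos
    have h6 : -(K+1) ≤ L x v := by
      have := abs_le.1 (hK x); linarith
    exact le_trans (min_le_right _ _) h6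

lemma global_lb {n : ℕ} (L : V n → V n → ℝ) (hL : Continuous (Function.uncurry L))
    (hconv : ∀ x : V n, StrictConvexOn ℝ Set.univ (L x))
    (hsuper : ∀ (x : V n) (C : ℝ), ∃ R : ℝ, ∀ v : V n, R ≤ ‖v‖ → C * ‖v‖ ≤ L x v)
    (hLper : ∀ (x v : V n) (m : Fin n → ℤ), L (x + intVec m) v = L x v)
    (K : ℝ) (hK : ∀ y : V n, |L y 0| ≤ K) :
    ∃ m : ℝ, ∀ (x v : V n), m ≤ L x v := by
  choose δ hδ m hm using local_lb L hL hconv hsuper K hK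
  obtain ⟨t, -, hcov⟩ := (isCompact_closedBall (0 : V n) (Real.sqrt n)).elim_nhds_subcover
    (fun x => Metric.ball x (δ x)) (fun x _ => Metric.ball_mem_nhds x (hδ x))
  have h0 : (0 : V n) ∈ Metric.closedBall (0 : V n) (Real.sqrt n) :=
    Metric.mem_closedBall_self (Real.sqrt_nonneg _)
  obtain ⟨x₀, hx₀t, -⟩ := Set.mem_iUnion₂.1 (hcov h0)
  have htne : t.Nonempty := ⟨x₀, hx₀t⟩
  refine ⟨t.inf' htne m, fun x v => ?_⟩
  obtain ⟨y, hy, mm, rfl⟩ := reduce x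
  rw [hLper y v mm]
  have hyK : y ∈ Metric.closedBall (0 : V n) (Real.sqrt n) := by
    simpa [Metric.mem_closedBall, dist_eq_norm] using hy
  obtain ⟨z, hzt, hyz⟩ := Set.mem_iUnion₂.1 (hcov hyK)
  exact le_trans (Finset.inf'_le m hzt) (hm z y hyz v)

lemma curveFrom_zero {n : ℕ} (x : V n) :
    curveFrom x (fun _ => (0 : V n)) = fun _ => x := by
  funext τ
  show x + ∫ s in (0:ℝ)..τ, (0 : V n) = x
  rw [intervalIntegral.integral_zero, add_zero]

/-- (`C⁰`-convergence with exponential rate.)  For a Tonelli Lagrangian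
`L` on `𝕋ⁿ`, `λ > 0` and `ψ ∈ C(𝕋ⁿ,ℝ)`, there is a constant `C₁` such that
`‖U_ψ(·,t) - u⁻‖_∞ ≤ C₁ e^{-λt}` for all `t ≥ 1`; in particular `T_t⁻ψ → u⁻`
uniformly with exponential rate `λ`. -/
theorem stmt6 {n : ℕ} (lam : ℝ) (hlam : 0 < lam)
    (L : V n → V n → ℝ)
    (hL : ContDiff ℝ 2 (Function.uncurry L))
    (hconv : ∀ x : V n, StrictConvexOn ℝ Set.univ (L x))
    (hsuper : ∀ (x : V n) (C : ℝ), ∃ R : ℝ, ∀ v : V n, R ≤ ‖v‖ → C * ‖v‖ ≤ L x v)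
    (hLper : ∀ (x v : V n) (m : Fin n → ℤ), L (x + intVec m) v = L x v)
    (ψ : V n → ℝ) (hψ : Continuous ψ)
    (hψper : ∀ (x : V n) (m : Fin n → ℤ), ψ (x + intVec m) = ψ x) :
    ∃ C₁ : ℝ, 0 < C₁ ∧ ∀ t : ℝ, 1 ≤ t → ∀ x : V n,
      |lax L lam ψ t x - uminus L lam x| ≤ C₁ * Real.exp (-(lam * t)) := by
  -- global bounds
  obtain ⟨K, hK0, hK⟩ := bdd_per (fun y => L y 0) (hL.continuous.comp
    (continuous_id.prodMk continuous_const)) (fun x m => hLper x 0 m)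
  obtain ⟨Kψ, hKψ0, hKψ⟩ := bdd_per ψ hψ hψper
  obtain ⟨m₀, hm₀⟩ := global_lb L hL.continuous hconv hsuper hLper K hK
  set M : ℝ := max 1 (max K (max Kψ (-m₀))) with hMdef
  have hM1 : (1:ℝ) ≤ M := le_max_left _ _
  have hMpos : (0:ℝ) < M := lt_of_lt_of_le one_pos hM1
  have hMK : K ≤ M := le_trans (le_max_left _ _) (le_max_right _ _)
  have hMψ : Kψ ≤ M := le_trans (le_trans (le_max_left _ _) (le_max_right _ _)) (le_max_right _ _)
  have hMm : -m₀ ≤ M := le_trans (le_trans (le_max_right _ _) (le_max_right _ _)) (le_max_right _ _)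
  have hLlb : ∀ (y v : V n), -M ≤ L y v := fun y v => le_trans (by linarith) (hm₀ y v)
  have hLK : ∀ y : V n, |L y 0| ≤ M := fun y => le_trans (hK y) hMK
  have hψM : ∀ y : V n, |ψ y| ≤ M := fun y => le_trans (hKψ y) hMψ
  refine ⟨M + M / lam, by positivity, fun t ht x => ?_⟩
  have htpos : (0:ℝ) < t := lt_of_lt_of_le one_pos ht
  have hmt : -t ≤ (0:ℝ) := by linarith
  have hεe : Real.exp (lam * -t) = Real.exp (-(lam * t)) := by rw [mul_neg]
  have hεpos : (0:ℝ) < Real.exp (-(lam * t)) := Real.exp_pos _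
  have hεle1 : Real.exp (-(lam * t)) ≤ 1 :=
    Real.exp_le_one_iff.2 (by nlinarith)
  -- the two sets
  have hlaxdef : lax L lam ψ t x = sInf { a | ∃ g : ℝ → V n,
      IntervalIntegrable g volume (-t) 0 ∧
      IntervalIntegrable (fun τ => Real.exp (lam * τ) * L (curveFrom x g τ) (g τ))
        volume (-t) 0 ∧
      a = Real.exp (-(lam * t)) * ψ (curveFrom x g (-t)) +
        ∫ τ in (-t)..0, Real.exp (lam * τ) * L (curveFrom x g τ) (g τ) } := rfl
  have huminusdef : uminus L lam x = sInf { a | ∃ g : ℝ → V n,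
      (∀ T : ℝ, IntervalIntegrable g volume (-T) 0) ∧
      IntegrableOn (fun τ => Real.exp (lam * τ) * L (curveFrom x g τ) (g τ)) (Set.Iic 0)
        volume ∧
      a = ∫ τ in Set.Iic (0:ℝ), Real.exp (lam * τ) * L (curveFrom x g τ) (g τ) } := rfl
  -- pointwise lower bound for any integrand
  have hptlb : ∀ (g : ℝ → V n) (τ : ℝ),
      -M * Real.exp (lam * τ) ≤ Real.exp (lam * τ) * L (curveFrom x g τ) (g τ) := by
    intro g τ
    have h1 := mul_le_mul_of_nonneg_left (hLlb (curveFrom x g τ) (g τ))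
      (Real.exp_nonneg (lam * τ))
    nlinarith [h1]
  -- nonemptiness of both sets (zero curve)
  have hc0 := curveFrom_zero x
  have hSne : { a | ∃ g : ℝ → V n, (∀ T : ℝ, IntervalIntegrable g volume (-T) 0) ∧
      IntegrableOn (fun τ => Real.exp (lam * τ) * L (curveFrom x g τ) (g τ)) (Set.Iic 0)
        volume ∧
      a = ∫ τ in Set.Iic (0:ℝ), Real.exp (lam * τ) * L (curveFrom x g τ) (g τ) }.Nonempty := by
    refine ⟨_, (fun _ => (0:V n)), fun T => intervalIntegrable_const, ?_, rfl⟩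
    simp only [hc0]
    exact (expIic_integrableOn hlam 0).mul_const _
  have hStne : { a | ∃ g : ℝ → V n, IntervalIntegrable g volume (-t) 0 ∧
      IntervalIntegrable (fun τ => Real.exp (lam * τ) * L (curveFrom x g τ) (g τ))
        volume (-t) 0 ∧
      a = Real.exp (-(lam * t)) * ψ (curveFrom x g (-t)) +
        ∫ τ in (-t)..0, Real.exp (lam * τ) * L (curveFrom x g τ) (g τ) }.Nonempty := by
    refine ⟨_, (fun _ => (0:V n)), intervalIntegrable_const, ?_, rfl⟩
    simp only [hc0]
    exact ((Real.continuous_exp.comp (continuous_const.mul continuous_id)).mul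
      continuous_const).intervalIntegrable _ _
  -- bddBelow of both sets
  have hSbdd : BddBelow { a | ∃ g : ℝ → V n, (∀ T : ℝ, IntervalIntegrable g volume (-T) 0) ∧
      IntegrableOn (fun τ => Real.exp (lam * τ) * L (curveFrom x g τ) (g τ)) (Set.Iic 0)
        volume ∧
      a = ∫ τ in Set.Iic (0:ℝ), Real.exp (lam * τ) * L (curveFrom x g τ) (g τ) } := by
    refine ⟨-M * (Real.exp (lam * 0) / lam), ?_⟩
    rintro a ⟨g, hg, hint, rfl⟩
    exact tail_lb hlam hMpos.le (subset_refl _) hint (hptlb g)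
  have hStbdd : BddBelow { a | ∃ g : ℝ → V n, IntervalIntegrable g volume (-t) 0 ∧
      IntervalIntegrable (fun τ => Real.exp (lam * τ) * L (curveFrom x g τ) (g τ))
        volume (-t) 0 ∧
      a = Real.exp (-(lam * t)) * ψ (curveFrom x g (-t)) +
        ∫ τ in (-t)..0, Real.exp (lam * τ) * L (curveFrom x g τ) (g τ) } := by
    refine ⟨-M + (-M * (Real.exp (lam * 0) / lam)), ?_⟩
    rintro a ⟨g, hg, hint, rfl⟩
    have hIoc : IntegrableOn (fun τ => Real.exp (lam * τ) * L (curveFrom x g τ) (g τ))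
        (Ioc (-t) 0) volume :=
      (intervalIntegrable_iff_integrableOn_Ioc_of_le hmt).1 hint
    have h1 : -M * (Real.exp (lam * 0) / lam) ≤
        ∫ τ in Ioc (-t) 0, Real.exp (lam * τ) * L (curveFrom x g τ) (g τ) :=
      tail_lb hlam hMpos.le Ioc_subset_Iic_self hIoc (hptlb g)
    have h2 : ∫ τ in (-t)..0, Real.exp (lam * τ) * L (curveFrom x g τ) (g τ) =
        ∫ τ in Ioc (-t) 0, Real.exp (lam * τ) * L (curveFrom x g τ) (g τ) :=
      intervalIntegral.integral_of_le hmt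
    have h3 : -M ≤ Real.exp (-(lam * t)) * ψ (curveFrom x g (-t)) := by
      have habs := abs_le.1 (hψM (curveFrom x g (-t)))
      nlinarith [hεpos, hεle1, habs.1, habs.2]
    rw [h2] at *
    linarith
  -- Direction 1 : lax ≤ uminus + (M + M/lam) e^{-λt}
  have dir1 : lax L lam ψ t x ≤ uminus L lam x + (M + M / lam) * Real.exp (-(lam * t)) := by
    have key : lax L lam ψ t x - (M + M / lam) * Real.exp (-(lam * t)) ≤ uminus L lam x := by
      rw [huminusdef]
      apply le_csInf hSne
      rintro a ⟨g, hg, hint, rfl⟩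
      have hIoc : IntegrableOn (fun τ => Real.exp (lam * τ) * L (curveFrom x g τ) (g τ))
          (Ioc (-t) 0) volume := hint.mono_set Ioc_subset_Iic_self
      have hIict : IntegrableOn (fun τ => Real.exp (lam * τ) * L (curveFrom x g τ) (g τ))
          (Iic (-t)) volume := hint.mono_set (Iic_subset_Iic.2 hmt)
      have hsplit := integral_Iic_sub_Iic hIict hint
      have hb : (Real.exp (-(lam * t)) * ψ (curveFrom x g (-t)) +
          ∫ τ in (-t)..0, Real.exp (lam * τ) * L (curveFrom x g τ) (g τ)) ∈
          { a | ∃ g : ℝ → V n, IntervalIntegrable g volume (-t) 0 ∧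
            IntervalIntegrable (fun τ => Real.exp (lam * τ) * L (curveFrom x g τ) (g τ))
              volume (-t) 0 ∧
            a = Real.exp (-(lam * t)) * ψ (curveFrom x g (-t)) +
              ∫ τ in (-t)..0, Real.exp (lam * τ) * L (curveFrom x g τ) (g τ) } :=
        ⟨g, hg t, (intervalIntegrable_iff_integrableOn_Ioc_of_le hmt).2 hIoc, rfl⟩
      have hlaxle : lax L lam ψ t x ≤ Real.exp (-(lam * t)) * ψ (curveFrom x g (-t)) +
          ∫ τ in (-t)..0, Real.exp (lam * τ) * L (curveFrom x g τ) (g τ) := by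
        rw [hlaxdef]; exact csInf_le hStbdd hb
      have htail : -M * (Real.exp (lam * -t) / lam) ≤
          ∫ τ in Iic (-t), Real.exp (lam * τ) * L (curveFrom x g τ) (g τ) :=
        tail_lb hlam hMpos.le (subset_refl _) hIict (hptlb g)
      have hψb : Real.exp (-(lam * t)) * ψ (curveFrom x g (-t)) ≤
          M * Real.exp (-(lam * t)) := by
        have habs := abs_le.1 (hψM (curveFrom x g (-t)))
        nlinarith [hεpos, habs.2]
      rw [hεe] at htail
      have hdiv : -M * (Real.exp (-(lam * t)) / lam) = -(M / lam) * Real.exp (-(lam * t)) := by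
        ring
      rw [hdiv] at htail
      linarith
    linarith
  -- Direction 2 : uminus ≤ lax + (M + M/lam) e^{-λt}
  have dir2 : uminus L lam x ≤ lax L lam ψ t x + (M + M / lam) * Real.exp (-(lam * t)) := by
    have key : uminus L lam x - (M + M / lam) * Real.exp (-(lam * t)) ≤ lax L lam ψ t x := by
      rw [hlaxdef]
      apply le_csInf hStne
      rintro a ⟨g, hg, hh, rfl⟩
      set g' : ℝ → V n := (Ioc (-t) 0).indicator g with hg'def
      have hgInt : IntegrableOn g (Ioc (-t) 0) volume :=
        (intervalIntegrable_iff_integrableOn_Ioc_of_le hmt).1 hg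
      have hg'glob : Integrable g' volume :=
        (integrable_indicator_iff measurableSet_Ioc).2 hgInt
      have hg'T : ∀ T : ℝ, IntervalIntegrable g' volume (-T) 0 :=
        fun T => hg'glob.intervalIntegrable
      -- curve facts
      have hcurve_eq : ∀ τ, -t ≤ τ → τ ≤ 0 → curveFrom x g' τ = curveFrom x g τ := by
        intro τ h1 h2
        show x + ∫ s in (0:ℝ)..τ, g' s = x + ∫ s in (0:ℝ)..τ, g s
        congr 1
        rw [intervalIntegral.integral_of_ge h2, intervalIntegral.integral_of_ge h2]
        congr 1
        apply setIntegral_congr_fun measurableSet_Ioc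
        intro s hs
        exact indicator_of_mem (Set.mem_Ioc.2 ⟨lt_of_le_of_lt h1 (Set.mem_Ioc.1 hs).1, (Set.mem_Ioc.1 hs).2⟩) g
      have hcurve_tail : ∀ τ, τ ≤ -t → curveFrom x g' τ = curveFrom x g (-t) := by
        intro τ hτ
        rw [← hcurve_eq (-t) le_rfl hmt]
        show x + ∫ s in (0:ℝ)..τ, g' s = x + ∫ s in (0:ℝ)..(-t), g' s
        congr 1
        rw [intervalIntegral.integral_of_ge (le_trans hτ hmt),
          intervalIntegral.integral_of_ge hmt]
        congr 1
        rw [← Ioc_union_Ioc_eq_Ioc hτ hmt,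
          setIntegral_union (Ioc_disjoint_Ioc_of_le le_rfl) measurableSet_Ioc
            (hg'glob.integrableOn) (hg'glob.integrableOn)]
        have hz : ∀ s ∈ Ioc τ (-t), g' s = 0 := by
          intro s hs
          exact indicator_of_notMem (fun hc => absurd hc.1 (not_lt.2 hs.2)) g
        rw [setIntegral_congr_fun measurableSet_Ioc hz]
        simp
      -- the new integrand
      have h'tail_eq : EqOn (fun τ => Real.exp (lam * τ) * L (curveFrom x g' τ) (g' τ))
          (fun τ => Real.exp (lam * τ) * L (curveFrom x g (-t)) 0) (Iic (-t)) := by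
        intro τ hτ
        have h1 : g' τ = 0 :=
          indicator_of_notMem (fun hc => absurd hc.1 (not_lt.2 (mem_Iic.1 hτ))) g
        simp only [h1, hcurve_tail τ (mem_Iic.1 hτ)]
      have h'mid_eq : EqOn (fun τ => Real.exp (lam * τ) * L (curveFrom x g' τ) (g' τ))
          (fun τ => Real.exp (lam * τ) * L (curveFrom x g τ) (g τ)) (Ioc (-t) 0) := by
        intro τ hτ
        have h1 : g' τ = g τ := indicator_of_mem hτ g
        simp only [h1, hcurve_eq τ hτ.1.le hτ.2]
      have hhIoc : IntegrableOn (fun τ => Real.exp (lam * τ) * L (curveFrom x g τ) (g τ))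
          (Ioc (-t) 0) volume := (intervalIntegrable_iff_integrableOn_Ioc_of_le hmt).1 hh
      have h'int : IntegrableOn (fun τ => Real.exp (lam * τ) * L (curveFrom x g' τ) (g' τ))
          (Iic 0) volume := by
        rw [← Iic_union_Ioc_eq_Iic hmt]
        exact (MeasureTheory.IntegrableOn.congr_fun
            ((expIic_integrableOn hlam (-t)).mul_const _)
            h'tail_eq.symm measurableSet_Iic).union
          (MeasureTheory.IntegrableOn.congr_fun hhIoc h'mid_eq.symm measurableSet_Ioc)
      have hmem : (∫ τ in Set.Iic (0:ℝ), Real.exp (lam * τ) * L (curveFrom x g' τ) (g' τ)) ∈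
          { a | ∃ g : ℝ → V n, (∀ T : ℝ, IntervalIntegrable g volume (-T) 0) ∧
            IntegrableOn (fun τ => Real.exp (lam * τ) * L (curveFrom x g τ) (g τ)) (Set.Iic 0)
              volume ∧
            a = ∫ τ in Set.Iic (0:ℝ), Real.exp (lam * τ) * L (curveFrom x g τ) (g τ) } :=
        ⟨g', hg'T, h'int, rfl⟩
      have huml : uminus L lam x ≤
          ∫ τ in Set.Iic (0:ℝ), Real.exp (lam * τ) * L (curveFrom x g' τ) (g' τ) := by
        rw [huminusdef]; exact csInf_le hSbdd hmem
      -- split the value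
      have h'Iict : IntegrableOn (fun τ => Real.exp (lam * τ) * L (curveFrom x g' τ) (g' τ))
          (Iic (-t)) volume := h'int.mono_set (Iic_subset_Iic.2 hmt)
      have hsplit := integral_Iic_sub_Iic h'Iict h'int
      have hmid : ∫ τ in (-t)..0, Real.exp (lam * τ) * L (curveFrom x g' τ) (g' τ) =
          ∫ τ in (-t)..0, Real.exp (lam * τ) * L (curveFrom x g τ) (g τ) := by
        rw [intervalIntegral.integral_of_le hmt, intervalIntegral.integral_of_le hmt]
        exact setIntegral_congr_fun measurableSet_Ioc h'mid_eq
      have htail_le : ∫ τ in Iic (-t), Real.exp (lam * τ) * L (curveFrom x g' τ) (g' τ) ≤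
          M * (Real.exp (lam * -t) / lam) := by
        rw [setIntegral_congr_fun measurableSet_Iic h'tail_eq]
        have heq2 : ∫ τ in Iic (-t), Real.exp (lam * τ) * L (curveFrom x g (-t)) 0 =
            (∫ τ in Iic (-t), Real.exp (lam * τ)) * L (curveFrom x g (-t)) 0 :=
          integral_mul_const _ _
        rw [heq2, expIic_integral hlam (-t)]
        have hb : L (curveFrom x g (-t)) 0 ≤ M :=
          le_trans (le_abs_self _) (hLK _)
        have hpos : (0:ℝ) < Real.exp (lam * -t) / lam := by positivity
        calc Real.exp (lam * -t) / lam * L (curveFrom x g (-t)) 0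
            ≤ Real.exp (lam * -t) / lam * M := mul_le_mul_of_nonneg_left hb hpos.le
          _ = M * (Real.exp (lam * -t) / lam) := by ring
      have hψlb : -M ≤ ψ (curveFrom x g (-t)) := (abs_le.1 (hψM _)).1
      have hψterm : -(M * Real.exp (-(lam * t))) ≤
          Real.exp (-(lam * t)) * ψ (curveFrom x g (-t)) := by
        nlinarith [hεpos, hψlb]
      rw [hεe] at htail_le
      have hdiv : M * (Real.exp (-(lam * t)) / lam) = (M / lam) * Real.exp (-(lam * t)) := by
        ring
      rw [hdiv] at htail_le
      linarith
    linarith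
  rw [abs_sub_le_iff]
  constructor <;> linarith
end
end

section
/- Let L : 𝕋ⁿ × ℝⁿ → ℝ be continuous with L(x,v) ≥ k|v| - l for constants k > 0, l ≥ 0, and λ > 0. Suppose γ : [-σ,0] → 𝕋ⁿ with 1/2 ≤ σ ≤ 1 is a curve whose discounted action ∫_{-σ}^0 e^{λτ} L(γ,γ̇)dτ is at most C ∫_{-σ}^0 e^{λτ}dτ, where C bounds L(x,v) for |v| ≤ diam(𝕋ⁿ). Then ∫_{-σ}^0 |γ̇(τ)| dτ ≤ ((l + C)/(k λ)) e^{λσ}(e^{λσ} - 1), and in particular there exists t′ ∈ [-σ,0] with |γ̇(t′)| ≤ ((l+C)/(kλ)) · (e^{λσ}-1)/σ. -/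
open MeasureTheory Set Filter Topology intervalIntegral

noncomputable section

/-- (A priori compactness estimate.)  Let `L` be continuous with
`L(x,v) ≥ k‖v‖ - l` (`k > 0`, `l ≥ 0`) and `λ > 0`.  If `γ : [-σ,0] → 𝕋ⁿ`
(with `1/2 ≤ σ ≤ 1`) has discounted action `∫_{-σ}^0 e^{λτ} L(γ,γ̇) dτ ≤ C ∫_{-σ}^0 e^{λτ} dτ`,
where `C` bounds `L(x,v)` for `‖v‖ ≤ diam 𝕋ⁿ = √n`, then
`∫_{-σ}^0 ‖γ̇‖ ≤ ((l+C)/(kλ)) e^{λσ}(e^{λσ}-1)`, and there is `t' ∈ [-σ,0]` with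
`‖γ̇(t')‖ ≤ ((l+C)/(kλ)) (e^{λσ}-1)/σ`. -/
theorem stmt7 {n : ℕ} (lam k l C σ : ℝ)
    (hlam : 0 < lam) (hk : 0 < k) (hl : 0 ≤ l)
    (hσ₁ : 1/2 ≤ σ) (hσ₂ : σ ≤ 1)
    (L : V n → V n → ℝ) (hL : Continuous (Function.uncurry L))
    (hLlow : ∀ (x v : V n), k * ‖v‖ - l ≤ L x v)
    (hC : ∀ (x v : V n), ‖v‖ ≤ Real.sqrt n → L x v ≤ C)
    (x : V n) (g : ℝ → V n)
    (hg : IntervalIntegrable g volume (-σ) 0)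
    (hgn : IntervalIntegrable (fun τ => ‖g τ‖) volume (-σ) 0)
    (hact : IntervalIntegrable
      (fun τ => Real.exp (lam * τ) * L (curveFrom x g τ) (g τ)) volume (-σ) 0)
    (hsmall : (∫ τ in (-σ)..0, Real.exp (lam * τ) * L (curveFrom x g τ) (g τ))
        ≤ C * ∫ τ in (-σ)..0, Real.exp (lam * τ)) :
    (∫ τ in (-σ)..0, ‖g τ‖)
        ≤ (l + C) / (k * lam) * Real.exp (lam * σ) * (Real.exp (lam * σ) - 1) ∧
    ∃ t' ∈ Set.Icc (-σ) (0:ℝ),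
      ‖g t'‖ ≤ (l + C) / (k * lam) * ((Real.exp (lam * σ) - 1) / σ) := by
  have hσ0 : 0 < σ := by linarith
  have hneg : (-σ : ℝ) ≤ 0 := by linarith
  have hE : Continuous fun τ : ℝ => Real.exp (lam * τ) := by continuity
  have hEint : IntervalIntegrable (fun τ => Real.exp (lam * τ)) volume (-σ) 0 :=
    hE.intervalIntegrable _ _
  have h1 : IntervalIntegrable (fun τ => Real.exp (lam * τ) * ‖g τ‖) volume (-σ) 0 :=
    hgn.continuousOn_mul hE.continuousOn
  set I1 := ∫ τ in (-σ)..0, Real.exp (lam * τ) * ‖g τ‖ with hI1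
  set Ie := ∫ τ in (-σ)..0, Real.exp (lam * τ) with hIedef
  set I0 := ∫ τ in (-σ)..0, ‖g τ‖ with hI0
  -- value of Ie
  have hIe : Ie = (1 - Real.exp (lam * -σ)) / lam := by
    have hderiv : ∀ τ ∈ Set.uIcc (-σ) (0:ℝ),
        HasDerivAt (fun t => Real.exp (lam * t) / lam) (Real.exp (lam * τ)) τ := by
      intro τ _
      have h := ((Real.hasDerivAt_exp (lam * τ)).comp τ
        ((hasDerivAt_id τ).const_mul lam)).div_const lam
      simpa [mul_comm, mul_div_assoc, mul_div_cancel_left₀ _ hlam.ne'] using h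
    rw [hIedef, intervalIntegral.integral_eq_sub_of_hasDerivAt hderiv hEint]
    simp [sub_div]
  have hIepos : 0 < Ie := by
    rw [hIe]
    have : Real.exp (lam * -σ) < 1 := by
      rw [Real.exp_lt_one_iff]; nlinarith
    exact div_pos (by linarith) hlam
  -- lower bound for the action integrand
  have hint2 : IntervalIntegrable (fun τ => Real.exp (lam * τ) * (k * ‖g τ‖ - l))
      volume (-σ) 0 := by
    have h := (h1.const_mul k).sub (hEint.const_mul l)
    have heq : (fun τ => k * (Real.exp (lam * τ) * ‖g τ‖) - l * Real.exp (lam * τ))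
        = fun τ => Real.exp (lam * τ) * (k * ‖g τ‖ - l) := by
      funext τ; ring
    rwa [heq] at h
  have hlow : (∫ τ in (-σ)..0, Real.exp (lam * τ) * (k * ‖g τ‖ - l))
      ≤ ∫ τ in (-σ)..0, Real.exp (lam * τ) * L (curveFrom x g τ) (g τ) := by
    apply intervalIntegral.integral_mono_on hneg hint2 hact
    intro t _
    exact mul_le_mul_of_nonneg_left (hLlow _ _) (Real.exp_nonneg _)
  have hsplit : (∫ τ in (-σ)..0, Real.exp (lam * τ) * (k * ‖g τ‖ - l))
      = k * I1 - l * Ie := by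
    rw [hI1, hIedef, ← intervalIntegral.integral_const_mul,
      ← intervalIntegral.integral_const_mul,
      ← intervalIntegral.integral_sub (h1.const_mul k) (hEint.const_mul l)]
    congr 1; funext τ; ring
  have hkey : k * I1 ≤ (l + C) * Ie := by
    have := hlow.trans hsmall
    rw [hsplit] at this
    linarith
  -- l + C ≥ 0
  have hlC : 0 ≤ l + C := by
    have h1 := hLlow x 0
    have h2 := hC x 0 (by simp [Real.sqrt_nonneg])
    simp at h1
    linarith
  -- I0 ≤ exp(lam σ) * I1
  have hmono : I0 ≤ Real.exp (lam * σ) * I1 := by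
    rw [hI0, hI1, ← intervalIntegral.integral_const_mul]
    apply intervalIntegral.integral_mono_on hneg hgn (h1.const_mul _)
    intro t ht
    have h1' : (1:ℝ) ≤ Real.exp (lam * σ) * Real.exp (lam * t) := by
      rw [← Real.exp_add]
      apply Real.one_le_exp
      nlinarith [ht.1]
    nlinarith [norm_nonneg (g t)]
  have hexp1 : (1:ℝ) ≤ Real.exp (lam * σ) := Real.one_le_exp (by positivity)
  have hee : Real.exp (lam * σ) * Real.exp (lam * -σ) = 1 := by
    rw [← Real.exp_add]; simp
  -- main bound : I0 ≤ (l+C)/(k*lam) * (exp(lam σ) - 1)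
  have hmain : I0 ≤ (l + C) / (k * lam) * (Real.exp (lam * σ) - 1) := by
    have hI1b : I1 ≤ (l + C) * Ie / k := by
      rw [le_div_iff₀ hk]; linarith
    have h2 : I0 ≤ Real.exp (lam * σ) * ((l + C) * Ie / k) := by
      refine hmono.trans ?_
      exact mul_le_mul_of_nonneg_left hI1b (Real.exp_nonneg _)
    rw [hIe] at h2
    have hinv : Real.exp (lam * -σ) = (Real.exp (lam * σ))⁻¹ := by
      rw [← Real.exp_neg]; congr 1; ring
    have heq : Real.exp (lam * σ) * ((l + C) * ((1 - Real.exp (lam * -σ)) / lam) / k)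
        = (l + C) / (k * lam) * (Real.exp (lam * σ) - 1) := by
      rw [hinv]
      have hu : Real.exp (lam * σ) ≠ 0 := (Real.exp_pos _).ne'
      field_simp
    linarith [heq ▸ h2]
  constructor
  · refine hmain.trans ?_
    have hA : 0 ≤ (l + C) / (k * lam) := by positivity
    nlinarith [mul_nonneg (mul_nonneg hA (sub_nonneg.mpr hexp1)) (sub_nonneg.mpr hexp1)]
  · by_contra hcon
    push_neg at hcon
    set B := (l + C) / (k * lam) * ((Real.exp (lam * σ) - 1) / σ) with hB
    have hpos : 0 < ∫ τ in (-σ)..0, (‖g τ‖ - B) := by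
      apply intervalIntegral_pos_of_pos_on (hgn.sub intervalIntegrable_const)
      · intro t ht
        have := hcon t ⟨ht.1.le, ht.2.le⟩
        linarith
      · linarith
    rw [intervalIntegral.integral_sub hgn intervalIntegrable_const,
      intervalIntegral.integral_const] at hpos
    have hBσ : B * σ = (l + C) / (k * lam) * (Real.exp (lam * σ) - 1) := by
      rw [hB]; field_simp
    simp only [smul_eq_mul, sub_neg_eq_add, zero_add] at hpos
    have : B * σ < I0 := by nlinarith
    linarith [hBσ ▸ this]
end
end

section
/- Let M(θ) = (DK(θ) | V(θ)) where K : 𝕋ⁿ → T*𝕋ⁿ parametrizes a KAM torus with Φ¹(K(θ)) = K(θ+ω), and suppose the linearization satisfies DΦ¹(K(θ)) M(θ) = M(θ+ω) · [[Id, S(θ)],[0, e^{-λ} Id]] (upper triangular block form) with λ > 0 and S continuous on 𝕋ⁿ. Then the cohomological equation B(θ) - e^{-λ} B(θ+ω) = -S(θ) has a unique continuous solution B : 𝕋ⁿ → ℝ^{n×n}, given by B(θ) = -∑_{k≥0} e^{-λk} S(θ + kω), and with E^s spanned by DK(θ)B(θ) + V(θ) one gets the invariant splitting DΦ¹ ·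 (E^c | E^s) with diagonal block matrix diag(Id, e^{-λ}Id). -/
open MeasureTheory Set Filter Topology

noncomputable section

/-- A continuous ℤⁿ-periodic function on `V n` is bounded. -/
lemma bounded_of_periodic {n : ℕ} {E : Type*} [SeminormedAddGroup E]
    (f : V n → E) (hf : Continuous f)
    (hper : ∀ (θ : V n) (m : Fin n → ℤ), f (θ + intVec m) = f θ) :
    ∃ C : ℝ, 0 ≤ C ∧ ∀ θ, ‖f θ‖ ≤ C := by
  set frac : V n → V n := fun θ => (WithLp.toLp 2 (fun i => Int.fract (θ i)) : V n) with hfrac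
  have hmem : ∀ θ : V n, frac θ ∈ Metric.closedBall (0 : V n) (Real.sqrt n) := by
    intro θ
    rw [Metric.mem_closedBall, dist_zero_right, EuclideanSpace.norm_eq]
    apply Real.sqrt_le_sqrt
    calc ∑ i, ‖frac θ i‖ ^ 2 ≤ ∑ _i : Fin n, (1 : ℝ) := by
          apply Finset.sum_le_sum
          intro i _
          have h1 : ‖frac θ i‖ ≤ 1 := by
            show ‖Int.fract (θ i)‖ ≤ 1
            rw [Real.norm_eq_abs, abs_of_nonneg (Int.fract_nonneg (θ i))]
            exact (Int.fract_lt_one _).le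
          calc ‖frac θ i‖ ^ 2 ≤ 1 ^ 2 := by
                exact pow_le_pow_left₀ (norm_nonneg _) h1 2
            _ = 1 := one_pow 2
      _ = (n : ℝ) := by simp
  have hfθ : ∀ θ : V n, f θ = f (frac θ) := by
    intro θ
    have : frac θ + intVec (fun i => ⌊θ i⌋) = θ := by
      ext i
      show Int.fract (θ i) + ((⌊θ i⌋ : ℤ) : ℝ) = θ i
      exact Int.fract_add_floor (θ i)
    conv_lhs => rw [← this]
    rw [hper]
  obtain ⟨C, hC⟩ := (isCompact_closedBall (0 : V n) (Real.sqrt n)).exists_bound_of_continuousOn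
    hf.continuousOn
  refine ⟨max C 0, le_max_right _ _, fun θ => ?_⟩
  rw [hfθ θ]
  exact le_trans (hC _ (hmem θ)) (le_max_left _ _)

set_option maxHeartbeats 1000000 in
/-- Let `M(θ) = (DK(θ) | V(θ))` where `K` parametrizes a KAM torus with
`Φ¹(K(θ)) = K(θ+ω)`, and suppose the linearized dynamics is block upper-triangular:
`DΦ¹(K θ) ∘ DK θ = DK (θ+ω)` and `DΦ¹(K θ) ∘ V θ = DK (θ+ω) ∘ S θ + e^{-λ} V (θ+ω)`,
with `λ > 0` and `S` continuous on `𝕋ⁿ`.  Then the cohomological equation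
`B(θ) - e^{-λ} B(θ+ω) = -S(θ)` has a unique continuous (periodic) solution `B`, given by
`B(θ) = -∑_{k≥0} e^{-λk} S(θ + kω)`, and the bundle spanned by `DK(θ)B(θ) + V(θ)` is
invariant with contraction factor `e^{-λ}`, i.e. the splitting is block diagonal
`diag(Id, e^{-λ}Id)`. -/
theorem stmt16 {n : ℕ} (lam : ℝ) (hlam : 0 < lam) (ω : V n)
    (K : V n → V n × V n)
    (Φ : V n × V n → V n × V n) (hΦK : ∀ θ : V n, Φ (K θ) = K (θ + ω))
    (DΦ : V n × V n → (V n × V n) →L[ℝ] (V n × V n))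
    (hDΦ : ∀ θ : V n, HasFDerivAt Φ (DΦ (K θ)) (K θ))
    (DK Vm : V n → (V n →L[ℝ] (V n × V n)))
    (S : V n → (V n →L[ℝ] V n))
    (hS : Continuous S)
    (hSper : ∀ (θ : V n) (m : Fin n → ℤ), S (θ + intVec m) = S θ)
    (hblock1 : ∀ θ : V n, (DΦ (K θ)).comp (DK θ) = DK (θ + ω))
    (hblock2 : ∀ θ : V n, (DΦ (K θ)).comp (Vm θ) =
      (DK (θ + ω)).comp (S θ) + Real.exp (-lam) • Vm (θ + ω)) :
    (∃! B : V n → (V n →L[ℝ] V n),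
      Continuous B ∧ (∀ (θ : V n) (m : Fin n → ℤ), B (θ + intVec m) = B θ) ∧
      ∀ θ : V n, B θ - Real.exp (-lam) • B (θ + ω) = -S θ) ∧
    (∀ B : V n → (V n →L[ℝ] V n),
      (Continuous B ∧ (∀ (θ : V n) (m : Fin n → ℤ), B (θ + intVec m) = B θ) ∧
        ∀ θ : V n, B θ - Real.exp (-lam) • B (θ + ω) = -S θ) →
      (∀ θ : V n, B θ = -∑' k : ℕ, Real.exp (-(lam * k)) • S (θ + (k : ℝ) • ω)) ∧
      ∀ θ : V n, (DΦ (K θ)).comp ((DK θ).comp (B θ) + Vm θ) =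
        Real.exp (-lam) • ((DK (θ + ω)).comp (B (θ + ω)) + Vm (θ + ω))) := by
  have hr1 : Real.exp (-lam) < 1 := Real.exp_lt_one_iff.mpr (neg_neg_of_pos hlam)
  have hr0 : (0 : ℝ) ≤ Real.exp (-lam) := (Real.exp_pos _).le
  -- bound on S
  obtain ⟨C, hC0, hCb⟩ := bounded_of_periodic S hS hSper
  -- the terms of the series
  set f : V n → ℕ → (V n →L[ℝ] V n) :=
    fun θ k => Real.exp (-(lam * k)) • S (θ + (k : ℝ) • ω) with hf
  have hexp : ∀ k : ℕ, Real.exp (-(lam * k)) = Real.exp (-lam) ^ k := by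
    intro k
    rw [← Real.exp_nat_mul]
    ring_nf
  have hnorm : ∀ (θ : V n) (k : ℕ), ‖f θ k‖ ≤ C * Real.exp (-lam) ^ k := by
    intro θ k
    rw [hf]
    calc ‖Real.exp (-(lam * k)) • S (θ + (k : ℝ) • ω)‖
        ≤ ‖Real.exp (-(lam * k))‖ * ‖S (θ + (k : ℝ) • ω)‖ :=
          le_of_eq (norm_smul (Real.exp (-(lam * k))) (S (θ + (k : ℝ) • ω)))
      _ = Real.exp (-lam) ^ k * ‖S (θ + (k : ℝ) • ω)‖ := by
          rw [Real.norm_eq_abs, Real.abs_exp, hexp k]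
      _ ≤ C * Real.exp (-lam) ^ k := by
          rw [mul_comm C]
          exact mul_le_mul_of_nonneg_left (hCb _) (pow_nonneg hr0 k)
  have hsumC : Summable fun k : ℕ => C * Real.exp (-lam) ^ k :=
    (summable_geometric_of_lt_one hr0 hr1).mul_left C
  have hsum : ∀ θ : V n, Summable (f θ) := fun θ =>
    Summable.of_norm_bounded hsumC (hnorm θ)
  -- shift identity for arguments
  have hshift : ∀ (θ : V n) (k : ℕ), θ + ((k + 1 : ℕ) : ℝ) • ω = (θ + ω) + (k : ℝ) • ω := by
    intro θ k
    push_cast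
    rw [add_smul, one_smul]
    abel
  have hfshift : ∀ (θ : V n) (k : ℕ), f θ (k + 1) = Real.exp (-lam) • f (θ + ω) k := by
    intro θ k
    rw [hf]
    simp only [hshift θ k, smul_smul]
    congr 1
    rw [← Real.exp_add]
    push_cast
    ring_nf
  set B₀ : V n → (V n →L[ℝ] V n) := fun θ => -∑' k : ℕ, f θ k with hB₀
  -- B₀ satisfies the cohomological equation
  have heq0 : ∀ θ : V n, B₀ θ - Real.exp (-lam) • B₀ (θ + ω) = -S θ := by
    intro θ
    have h1 : ∑' k : ℕ, f θ k = f θ 0 + ∑' k : ℕ, f θ (k + 1) :=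
      (hsum θ).tsum_eq_zero_add
    have h2 : ∑' k : ℕ, f θ (k + 1) = Real.exp (-lam) • ∑' k : ℕ, f (θ + ω) k := by
      simp_rw [hfshift θ]
      exact ((hsum (θ + ω)).hasSum.const_smul _).tsum_eq
    have h3 : f θ 0 = S θ := by
      rw [hf]; simp
    rw [hB₀]
    simp only
    rw [h1, h2, h3]
    rw [smul_neg]
    abel
  -- B₀ is continuous
  have hcont0 : Continuous B₀ := by
    apply Continuous.neg
    apply continuous_tsum (u := fun k : ℕ => C * Real.exp (-lam) ^ k)
    · intro k
      exact (by fun_prop :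
        Continuous fun θ => Real.exp (-(lam * k)) • S (θ + (k : ℝ) • ω))
    · exact hsumC
    · intro k θ; exact hnorm θ k
  -- B₀ is periodic
  have hper0 : ∀ (θ : V n) (m : Fin n → ℤ), B₀ (θ + intVec m) = B₀ θ := by
    intro θ m
    rw [hB₀]
    simp only [neg_inj]
    apply tsum_congr
    intro k
    rw [hf]
    simp only
    have : θ + intVec m + (k : ℝ) • ω = (θ + (k : ℝ) • ω) + intVec m := by abel
    rw [this, hSper]
  -- key: any solution equals B₀
  have key : ∀ B : V n → (V n →L[ℝ] V n),
      (Continuous B ∧ (∀ (θ : V n) (m : Fin n → ℤ), B (θ + intVec m) = B θ) ∧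
        ∀ θ : V n, B θ - Real.exp (-lam) • B (θ + ω) = -S θ) → ∀ θ, B θ = B₀ θ := by
    rintro B ⟨hBc, hBper, hBeq⟩ θ
    obtain ⟨D, hD0, hDb⟩ := bounded_of_periodic B hBc hBper
    have hstep : ∀ x : V n, B x = -S x + Real.exp (-lam) • B (x + ω) := by
      intro x
      have h := hBeq x
      rw [sub_eq_iff_eq_add] at h
      exact h
    have hclaim : ∀ N : ℕ, B θ =
        -(∑ k ∈ Finset.range N, f θ k) + Real.exp (-(lam * N)) • B (θ + (N : ℝ) • ω) := by
      intro N
      induction N with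
      | zero => simp
      | succ N ih =>
        rw [ih, hstep (θ + (N : ℝ) • ω), Finset.sum_range_succ]
        have harg : θ + (N : ℝ) • ω + ω = θ + ((N + 1 : ℕ) : ℝ) • ω := by
          rw [hshift θ N]; abel
        have hexpN : Real.exp (-(lam * (N + 1 : ℕ))) =
            Real.exp (-(lam * N)) * Real.exp (-lam) := by
          rw [← Real.exp_add]; push_cast; ring_nf
        rw [smul_add, harg, smul_smul, ← hexpN, smul_neg]
        have hfN : Real.exp (-(lam * N)) • S (θ + (N : ℝ) • ω) = f θ N := rfl
        rw [hfN]
        abel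
    -- take limits
    have hlim1 : Tendsto (fun N => -(∑ k ∈ Finset.range N, f θ k)) atTop
        (𝓝 (-(∑' k : ℕ, f θ k))) := ((hsum θ).hasSum.tendsto_sum_nat).neg
    have hlim2 : Tendsto (fun N : ℕ => Real.exp (-(lam * N)) • B (θ + (N : ℝ) • ω)) atTop
        (𝓝 0) := by
      apply squeeze_zero_norm (a := fun N : ℕ => D * Real.exp (-lam) ^ N)
      · intro N
        calc ‖Real.exp (-(lam * N)) • B (θ + (N : ℝ) • ω)‖
            ≤ ‖Real.exp (-(lam * N))‖ * ‖B (θ + (N : ℝ) • ω)‖ :=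
              le_of_eq (norm_smul (Real.exp (-(lam * N))) (B (θ + (N : ℝ) • ω)))
          _ = Real.exp (-lam) ^ N * ‖B (θ + (N : ℝ) • ω)‖ := by
              rw [Real.norm_eq_abs, Real.abs_exp, hexp N]
          _ ≤ D * Real.exp (-lam) ^ N := by
              rw [mul_comm D]
              exact mul_le_mul_of_nonneg_left (hDb _) (pow_nonneg hr0 N)
      · have h := (tendsto_pow_atTop_nhds_zero_of_lt_one hr0 hr1).const_mul D
        rw [mul_zero] at h
        exact h
    have hlim : Tendsto (fun N : ℕ =>
        -(∑ k ∈ Finset.range N, f θ k) + Real.exp (-(lam * N)) • B (θ + (N : ℝ) • ω)) atTop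
        (𝓝 (-(∑' k : ℕ, f θ k) + 0)) := hlim1.add hlim2
    have hconst : Tendsto (fun _ : ℕ => B θ) atTop (𝓝 (B θ)) := tendsto_const_nhds
    have : B θ = -(∑' k : ℕ, f θ k) + 0 := by
      apply tendsto_nhds_unique hconst
      have : (fun _ : ℕ => B θ) = fun N : ℕ =>
          -(∑ k ∈ Finset.range N, f θ k) + Real.exp (-(lam * N)) • B (θ + (N : ℝ) • ω) := by
        funext N; exact hclaim N
      rw [this]
      exact hlim
    rw [this, add_zero, hB₀]
  constructor
  · refine ⟨B₀, ⟨hcont0, hper0, heq0⟩, ?_⟩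
    intro B hB
    funext θ
    exact key B hB θ
  · intro B hB
    constructor
    · exact key B hB
    · intro θ
      obtain ⟨hBc, hBper, hBeq⟩ := hB
      have hBS : Real.exp (-lam) • B (θ + ω) = B θ + S θ := by
        have h := hBeq θ
        rw [sub_eq_iff_eq_add'] at h
        rw [h]
        abel
      rw [ContinuousLinearMap.comp_add, ← ContinuousLinearMap.comp_assoc,
        hblock1 θ, hblock2 θ, smul_add, ← ContinuousLinearMap.comp_smul, hBS,
        ContinuousLinearMap.comp_add]
      abel
end
end
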